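/- Let A ∈ ℂ^{m×n} have rows of unit Euclidean norm, let x̂ ∈ ℂ^n, and let y ∈ ℝ^m with y_r = |(A x̂)_r|². Let σ > 0 satisfy ‖A v‖₂ ≥ σ‖v‖₂ for all v ∈ ℂ^n. Let {Γ_1,…,Γ_{N_b}} be a partition of the row indices {1,…,m} such that each row submatrix A_{Γ_r} has full row rank, and let 0 < α ≤ β satisfy α ≤ σ_min²(A_{Γ_r}) and σ_max²(A_{Γ_r}) ≤ β for every r (an (N_b, α, β) row paving of A). Fix x_0 ∈ ℂ^n and for each sequence (r_1,…,r_l) ∈ {1,…,N_b}^l define iterates by x_k = x_{k−1} + A_{Γ_{r_k}}†(√(y_{Γ_{r_k}}) ⊙ phase(A_{Γ_{r_k}} x_{k−1}) − A_{Γ_{r_k}} x_{k−1}), where M† = Mᴴ(MMᴴ)^{-1}. Then for every l ≥ 0, (1/N_b^l) Σ_{(r_1,…,r_l) ∈ {1,…,N_b}^l} dist²(x_l^{(r_1,…,r_l)}, x̂) ≤ (1 − σ²/(β N_b))^l · dist²(x_0, x̂) + (4β/(α σ²))·Σ_{r=1}^m y_r. (Convergence of the randomized block Kaczmarz method for phase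 retrieval with uniform block selection.) -/

import Mathlib

open scoped BigOperators ComplexConjugate

/-- phase(w) = w/|w| if w ≠ 0, else 1. -/
noncomputable def phase (w : ℂ) : ℂ := if w = 0 then 1 else w / (‖w‖ : ℂ)

/-- Euclidean norm of a complex vector. -/
noncomputable def evnorm {ι : Type*} [Fintype ι] (v : ι → ℂ) : ℝ :=
  Real.sqrt (∑ i, ‖v i‖ ^ 2)

/-- Euclidean norm of a real vector. -/
noncomputable def rvnorm {ι : Type*} [Fintype ι] (v : ι → ℝ) : ℝ :=
  Real.sqrt (∑ i, (v i) ^ 2)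

/-- Standard Hermitian inner product, conjugate-linear in the first argument. -/
noncomputable def hinner {n : ℕ} (a x : Fin n → ℂ) : ℂ := ∑ i, conj (a i) * x i

/-- dist(x, x̂) = min over unimodular ω of ‖x − ω·x̂‖₂. -/
noncomputable def pdist {n : ℕ} (x xhat : Fin n → ℂ) : ℝ :=
  ⨅ ω : {ω : ℂ // ‖ω‖ = 1}, evnorm (x - (ω : ℂ) • xhat)

/-- Operator (spectral) norm of a complex matrix w.r.t. Euclidean norms. -/
noncomputable def matOpNorm {ι κ : Type*} [Fintype ι] [Fintype κ] [DecidableEq κ]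
    (M : Matrix ι κ ℂ) : ℝ :=
  ‖LinearMap.toContinuousLinearMap (Matrix.toEuclideanLin M)‖

/-! ### Auxiliary machinery -/

/-- View a bare vector as an element of Euclidean space. -/
noncomputable def Evec {ι : Type*} [Fintype ι] (v : ι → ℂ) : EuclideanSpace ℂ ι := WithLp.toLp 2 v

local notation "⟪" x ", " y "⟫" => @inner ℂ _ _ x y

lemma evnorm_eq_norm {ι : Type*} [Fintype ι] (v : ι → ℂ) : evnorm v = ‖Evec v‖ := by
  rw [EuclideanSpace.norm_eq]
  unfold evnorm Evec
  rfl

lemma evnorm_nonneg {ι : Type*} [Fintype ι] (v : ι → ℂ) : 0 ≤ evnorm v :=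
  Real.sqrt_nonneg _

lemma evnorm_sq {ι : Type*} [Fintype ι] (v : ι → ℂ) :
    evnorm v ^ 2 = ∑ i, ‖v i‖ ^ 2 :=
  Real.sq_sqrt (Finset.sum_nonneg fun _ _ => sq_nonneg _)

lemma phase_abs (w : ℂ) : ‖phase w‖ = 1 := by
  unfold phase
  split_ifs with h
  · simp
  · have h0 : ‖w‖ ≠ 0 := norm_ne_zero_iff.mpr h
    rw [norm_div, Complex.norm_real, norm_norm, div_self h0]

lemma inner_mulVec_adj {ι κ : Type*} [Fintype ι] [Fintype κ]
    (N : Matrix κ ι ℂ) (v : ι → ℂ) (z : κ → ℂ) :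
    ⟪Evec (N.mulVec v), Evec z⟫ = ⟪Evec v, Evec (N.conjTranspose.mulVec z)⟫ := by
  simp only [PiLp.inner_apply, RCLike.inner_apply, Evec, Matrix.mulVec, dotProduct,
    Matrix.conjTranspose_apply, map_sum, map_mul, Finset.sum_mul, Finset.mul_sum,
    starRingEnd_apply]
  rw [Finset.sum_comm]
  exact Finset.sum_congr rfl fun i _ => Finset.sum_congr rfl fun j _ => by ring

instance : Nonempty {ω : ℂ // ‖ω‖ = 1} := ⟨⟨1, by simp⟩⟩

lemma pdist_nonneg {n : ℕ} (x xhat : Fin n → ℂ) : 0 ≤ pdist x xhat :=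
  Real.iInf_nonneg fun _ => evnorm_nonneg _

lemma pdist_le {n : ℕ} (x xhat : Fin n → ℂ) (ω : ℂ) (hω : ‖ω‖ = 1) :
    pdist x xhat ≤ evnorm (x - ω • xhat) :=
  ciInf_le ⟨0, by rintro v ⟨ω', rfl⟩; exact evnorm_nonneg _⟩
    (⟨ω, hω⟩ : {ω : ℂ // ‖ω‖ = 1})

lemma pdist_exists {n : ℕ} (x xhat : Fin n → ℂ) :
    ∃ ω : ℂ, ‖ω‖ = 1 ∧ pdist x xhat = evnorm (x - ω • xhat) := by
  have hset : {ω : ℂ | ‖ω‖ = 1} = Metric.sphere (0:ℂ) 1 := by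
    ext ω; simp [Complex.dist_eq]
  have hcomp : IsCompact {ω : ℂ | ‖ω‖ = 1} := hset ▸ isCompact_sphere 0 1
  have hcont : ContinuousOn (fun ω : ℂ => evnorm (x - ω • xhat))
      {ω : ℂ | ‖ω‖ = 1} := by
    have hfe : (fun ω : ℂ => evnorm (x - ω • xhat))
        = fun ω : ℂ => ‖Evec x - ω • Evec xhat‖ := by
      funext ω; rw [evnorm_eq_norm]; simp [Evec]
    rw [hfe]
    exact ((continuous_const.sub (continuous_id.smul continuous_const)).norm).continuousOn
  obtain ⟨ω₀, hω₀, hmin⟩ := hcomp.exists_isMinOn ⟨1, by simp⟩ hcont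
  exact ⟨ω₀, hω₀, le_antisymm (pdist_le x xhat ω₀ hω₀) (le_ciInf fun ω => hmin ω.2)⟩

lemma mulVec_norm_sq_le {n : ℕ} {κ : Type*} [Fintype κ]
    (N : Matrix κ (Fin n) ℂ) (β : ℝ) (hβ : 0 < β)
    (hhi : ∀ z : κ → ℂ, evnorm (N.conjTranspose.mulVec z) ^ 2 ≤ β * evnorm z ^ 2)
    (v : Fin n → ℂ) : evnorm (N.mulVec v) ^ 2 ≤ β * evnorm v ^ 2 := by
  have ht0 := evnorm_nonneg (N.mulVec v)
  have hv0 := evnorm_nonneg v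
  have h1 : evnorm (N.mulVec v) ^ 2
      = RCLike.re ⟪Evec (N.mulVec v), Evec (N.mulVec v)⟫ := by
    rw [evnorm_eq_norm, inner_self_eq_norm_sq (𝕜 := ℂ)]
  have h2 : evnorm (N.mulVec v) ^ 2
      ≤ evnorm v * evnorm (N.conjTranspose.mulVec (N.mulVec v)) := by
    rw [h1, inner_mulVec_adj]
    calc RCLike.re ⟪Evec v, Evec (N.conjTranspose.mulVec (N.mulVec v))⟫
        ≤ ‖(⟪Evec v, Evec (N.conjTranspose.mulVec (N.mulVec v))⟫ : ℂ)‖ :=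
          RCLike.re_le_norm _
      _ ≤ ‖Evec v‖ * ‖Evec (N.conjTranspose.mulVec (N.mulVec v))‖ := norm_inner_le_norm _ _
      _ = evnorm v * evnorm (N.conjTranspose.mulVec (N.mulVec v)) := by
          rw [← evnorm_eq_norm, ← evnorm_eq_norm]
  have h3 : evnorm (N.conjTranspose.mulVec (N.mulVec v))
      ≤ Real.sqrt β * evnorm (N.mulVec v) := by
    have h4 := hhi (N.mulVec v)
    have h5 : evnorm (N.conjTranspose.mulVec (N.mulVec v))
        = Real.sqrt (evnorm (N.conjTranspose.mulVec (N.mulVec v)) ^ 2) :=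
      (Real.sqrt_sq (evnorm_nonneg _)).symm
    rw [h5]
    calc Real.sqrt (evnorm (N.conjTranspose.mulVec (N.mulVec v)) ^ 2)
        ≤ Real.sqrt (β * evnorm (N.mulVec v) ^ 2) := Real.sqrt_le_sqrt h4
      _ = Real.sqrt β * evnorm (N.mulVec v) := by
          rw [Real.sqrt_mul hβ.le, Real.sqrt_sq ht0]
  nlinarith [Real.sqrt_nonneg β, Real.sq_sqrt hβ.le,
    sq_nonneg (evnorm (N.mulVec v) - Real.sqrt β * evnorm v),
    mul_le_mul_of_nonneg_left h3 hv0]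

/-- Pure linear-algebra decomposition identity for the Kaczmarz step. -/
lemma decomp {n : ℕ} {κ : Type*} [Fintype κ]
    (N : Matrix κ (Fin n) ℂ) (Q : Matrix (Fin n) κ ℂ)
    (x xhat : Fin n → ℂ) (b : κ → ℂ) (ω : ℂ) :
    x + Q.mulVec (b - N.mulVec x) - ω • xhat =
      ((x - ω • xhat) - Q.mulVec (N.mulVec (x - ω • xhat)))
        + Q.mulVec (b - ω • N.mulVec xhat) := by
  simp only [Matrix.mulVec_sub, Matrix.mulVec_smul]
  funext i
  simp only [Pi.add_apply, Pi.sub_apply, Pi.smul_apply, smul_eq_mul]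
  ring

/-- One-block bound for the phase-retrieval Kaczmarz step. -/
lemma block_bound {n : ℕ} {κ : Type*} [Fintype κ] [DecidableEq κ]
    (N : Matrix κ (Fin n) ℂ) (hfull : IsUnit (N * N.conjTranspose))
    (α β : ℝ) (hα : 0 < α) (hβ : 0 < β)
    (hlo : ∀ z : κ → ℂ, α * evnorm z ^ 2 ≤ evnorm (N.conjTranspose.mulVec z) ^ 2)
    (hhi : ∀ z : κ → ℂ, evnorm (N.conjTranspose.mulVec z) ^ 2 ≤ β * evnorm z ^ 2)
    (x xhat : Fin n → ℂ) (yb : κ → ℝ) (hyb : ∀ i, 0 ≤ yb i)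
    (hmag : ∀ i, ‖N.mulVec xhat i‖ = Real.sqrt (yb i))
    (ω : ℂ) (hω : ‖ω‖ = 1) :
    evnorm (x + (N.conjTranspose * (N * N.conjTranspose)⁻¹).mulVec
        (fun i => (Real.sqrt (yb i) : ℂ) * phase (N.mulVec x i) - N.mulVec x i)
      - ω • xhat) ^ 2 ≤
      evnorm (x - ω • xhat) ^ 2 - (1/β) * evnorm (N.mulVec (x - ω • xhat)) ^ 2
        + (4/α) * ∑ i, yb i := by
  have hdet : IsUnit (N * N.conjTranspose).det := (Matrix.isUnit_iff_isUnit_det _).mp hfull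
  set Q := N.conjTranspose * (N * N.conjTranspose)⁻¹ with hQ
  have hproj : ∀ z : κ → ℂ, N.mulVec (Q.mulVec z) = z := by
    intro z
    rw [Matrix.mulVec_mulVec, hQ, ← Matrix.mul_assoc,
      Matrix.mul_nonsing_inv _ hdet, Matrix.one_mulVec]
  have horth : ∀ v : Fin n → ℂ, N.mulVec v = 0 →
      ∀ z : κ → ℂ, ⟪Evec v, Evec (Q.mulVec z)⟫ = 0 := by
    intro v hv z
    rw [hQ, ← Matrix.mulVec_mulVec, ← inner_mulVec_adj, hv]
    simp [Evec]
  have hQnorm : ∀ d : κ → ℂ, evnorm (Q.mulVec d) ^ 2 ≤ (1/α) * evnorm d ^ 2 := by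
    intro d
    set z := ((N * N.conjTranspose)⁻¹).mulVec d with hz
    have hQd : Q.mulVec d = N.conjTranspose.mulVec z := by
      rw [hQ, ← Matrix.mulVec_mulVec, hz]
    have hNNz : N.mulVec (N.conjTranspose.mulVec z) = d := by
      rw [Matrix.mulVec_mulVec, hz, Matrix.mulVec_mulVec,
        Matrix.mul_nonsing_inv _ hdet, Matrix.one_mulVec]
    have h1 : evnorm (N.conjTranspose.mulVec z) ^ 2 ≤ evnorm d * evnorm z := by
      have e1 : evnorm (N.conjTranspose.mulVec z) ^ 2
          = RCLike.re ⟪Evec (N.conjTranspose.mulVec z), Evec (N.conjTranspose.mulVec z)⟫ := by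
        rw [evnorm_eq_norm, inner_self_eq_norm_sq (𝕜 := ℂ)]
      rw [e1, ← inner_mulVec_adj, hNNz]
      calc RCLike.re ⟪Evec d, Evec z⟫ ≤ ‖(⟪Evec d, Evec z⟫ : ℂ)‖ := RCLike.re_le_norm _
        _ ≤ ‖Evec d‖ * ‖Evec z‖ := norm_inner_le_norm _ _
        _ = evnorm d * evnorm z := by rw [← evnorm_eq_norm, ← evnorm_eq_norm]
    have h2 := hlo z
    have hD := evnorm_nonneg d
    have hZ := evnorm_nonneg z
    have hW := evnorm_nonneg (N.conjTranspose.mulVec z)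
    rw [hQd]
    have hαW : α * evnorm (N.conjTranspose.mulVec z) ^ 2 ≤ evnorm d ^ 2 := by
      nlinarith [sq_nonneg (evnorm d - α * evnorm z),
        mul_le_mul_of_nonneg_left h1 hα.le, mul_le_mul_of_nonneg_left h2 hα.le]
    have h6 : (1/α) * (α * evnorm (N.conjTranspose.mulVec z) ^ 2)
        ≤ (1/α) * evnorm d ^ 2 := mul_le_mul_of_nonneg_left hαW (by positivity)
    have h7 : (1/α) * (α * evnorm (N.conjTranspose.mulVec z) ^ 2)
        = evnorm (N.conjTranspose.mulVec z) ^ 2 := by field_simp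
    linarith
  set e := x - ω • xhat with he
  set pe := Q.mulVec (N.mulVec e) with hpe
  set u := e - pe with hu2
  set b : κ → ℂ := (fun i => ((Real.sqrt (yb i) : ℝ) : ℂ) * phase (N.mulVec x i)) with hbdef
  set d := b - ω • N.mulVec xhat with hddef
  have hNu : N.mulVec u = 0 := by
    rw [hu2, Matrix.mulVec_sub, hpe, hproj, sub_self]
  have hdecomp : x + Q.mulVec
      (fun i => (Real.sqrt (yb i) : ℂ) * phase (N.mulVec x i) - N.mulVec x i)
        - ω • xhat = u + Q.mulVec d := by
    have h1 : (fun i => (Real.sqrt (yb i) : ℂ) * phase (N.mulVec x i) - N.mulVec x i)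
        = b - N.mulVec x := by
      funext i; rw [hbdef]; rfl
    rw [h1, hu2, hpe, hddef, hbdef, he]
    exact decomp N Q x xhat _ ω
  have hre0 : RCLike.re ⟪Evec u, Evec (Q.mulVec d)⟫ = 0 := by
    rw [horth u hNu d]; exact map_zero _
  have hpyth : evnorm (u + Q.mulVec d) ^ 2 = evnorm u ^ 2 + evnorm (Q.mulVec d) ^ 2 := by
    rw [evnorm_eq_norm, evnorm_eq_norm, evnorm_eq_norm]
    have hEadd : Evec (u + Q.mulVec d) = Evec u + Evec (Q.mulVec d) := by simp [Evec]
    rw [hEadd, norm_add_sq (𝕜 := ℂ), hre0]; ring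
  have hre0' : RCLike.re ⟪Evec u, Evec pe⟫ = 0 := by
    rw [hpe, horth u hNu]; exact map_zero _
  have hpyth2 : evnorm e ^ 2 = evnorm u ^ 2 + evnorm pe ^ 2 := by
    have h1 : e = u + pe := by rw [hu2]; abel
    rw [h1, evnorm_eq_norm, evnorm_eq_norm, evnorm_eq_norm]
    have hEadd : Evec (u + pe) = Evec u + Evec pe := by simp [Evec]
    rw [hEadd, norm_add_sq (𝕜 := ℂ), hre0']; ring
  have hpe_lb : evnorm (N.mulVec e) ^ 2 ≤ β * evnorm pe ^ 2 := by
    have h1 : N.mulVec pe = N.mulVec e := by rw [hpe, hproj]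
    calc evnorm (N.mulVec e) ^ 2 = evnorm (N.mulVec pe) ^ 2 := by rw [h1]
      _ ≤ β * evnorm pe ^ 2 := mulVec_norm_sq_le N β hβ hhi pe
  have hdb : evnorm d ^ 2 ≤ 4 * ∑ i, yb i := by
    rw [evnorm_sq]
    have hterm : ∀ i, ‖d i‖ ^ 2 ≤ 4 * yb i := by
      intro i
      have hdi : d i = ((Real.sqrt (yb i) : ℝ) : ℂ) * phase (N.mulVec x i)
          - ω * N.mulVec xhat i := by
        rw [hddef, hbdef]; rfl
      have h1 : ‖d i‖ ≤ 2 * Real.sqrt (yb i) := by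
        rw [hdi]
        calc ‖((Real.sqrt (yb i) : ℝ) : ℂ) * phase (N.mulVec x i) - ω * N.mulVec xhat i‖
            ≤ ‖((Real.sqrt (yb i) : ℝ) : ℂ) * phase (N.mulVec x i)‖
              + ‖ω * N.mulVec xhat i‖ := norm_sub_le _ _
          _ = Real.sqrt (yb i) * 1 + 1 * Real.sqrt (yb i) := by
              rw [norm_mul, norm_mul, phase_abs, hω, hmag i,
                Complex.norm_of_nonneg (Real.sqrt_nonneg _)]
          _ = 2 * Real.sqrt (yb i) := by ring
      have h2 : (0:ℝ) ≤ ‖d i‖ := norm_nonneg _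
      calc ‖d i‖ ^ 2 ≤ (2 * Real.sqrt (yb i)) ^ 2 := by
            exact pow_le_pow_left₀ h2 h1 2
        _ = 4 * yb i := by
            rw [mul_pow, Real.sq_sqrt (hyb i)]; norm_num
    calc ∑ i, ‖d i‖ ^ 2 ≤ ∑ i, 4 * yb i :=
          Finset.sum_le_sum fun i _ => hterm i
      _ = 4 * ∑ i, yb i := by rw [Finset.mul_sum]
  rw [hdecomp, hpyth]
  have k1 : evnorm (Q.mulVec d) ^ 2 ≤ (1/α) * (4 * ∑ i, yb i) :=
    le_trans (hQnorm d) (mul_le_mul_of_nonneg_left hdb (by positivity))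
  have k2 : (1/β) * evnorm (N.mulVec e) ^ 2 ≤ (1/β) * (β * evnorm pe ^ 2) :=
    mul_le_mul_of_nonneg_left hpe_lb (by positivity)
  have k3 : (1/β) * (β * evnorm pe ^ 2) = evnorm pe ^ 2 := by field_simp
  have k4 : (1/α) * (4 * ∑ i, yb i) = (4/α) * ∑ i, yb i := by ring
  linarith [hpyth2]

set_option maxHeartbeats 2000000 in
/-- Convergence of the randomized block Kaczmarz method for phase
retrieval with uniform block selection, under an (N_b, α, β) row paving of A.
The singular value bounds α ≤ σ_min²(A_Γ) and σ_max²(A_Γ) ≤ β are expressed as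
α‖z‖₂² ≤ ‖A_Γᴴ z‖₂² ≤ β‖z‖₂² for all z. -/
theorem stmt12 {m n Nb : ℕ} (A : Matrix (Fin m) (Fin n) ℂ)
    (hrows : ∀ r : Fin m, evnorm (fun j => A r j) = 1)
    (xhat : Fin n → ℂ) (y : Fin m → ℝ)
    (hy : ∀ r, y r = ‖A.mulVec xhat r‖ ^ 2)
    (σ : ℝ) (hσ : 0 < σ)
    (hsing : ∀ v : Fin n → ℂ, σ * evnorm v ≤ evnorm (A.mulVec v))
    (Γ : Fin Nb → Finset (Fin m))
    (hdisj : ∀ i j : Fin Nb, i ≠ j → Disjoint (Γ i) (Γ j))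
    (hcover : ∀ k : Fin m, ∃ r, k ∈ Γ r)
    (M : (r : Fin Nb) → Matrix (Γ r) (Fin n) ℂ)
    (hM : ∀ r (i : Γ r) (j : Fin n), M r i j = A i.1 j)
    (hfull : ∀ r, IsUnit (M r * (M r).conjTranspose))
    (α β : ℝ) (hα : 0 < α) (hαβ : α ≤ β)
    (hpave_lo : ∀ r (z : Γ r → ℂ),
      α * evnorm z ^ 2 ≤ evnorm ((M r).conjTranspose.mulVec z) ^ 2)
    (hpave_hi : ∀ r (z : Γ r → ℂ),
      evnorm ((M r).conjTranspose.mulVec z) ^ 2 ≤ β * evnorm z ^ 2)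
    (x0 : Fin n → ℂ)
    (step : (Fin n → ℂ) → Fin Nb → (Fin n → ℂ))
    (hstep : ∀ (x : Fin n → ℂ) (r : Fin Nb), step x r =
      x + ((M r).conjTranspose * (M r * (M r).conjTranspose)⁻¹).mulVec
        (fun i => (Real.sqrt (y i.1) : ℂ) * phase ((M r).mulVec x i) - (M r).mulVec x i)) :
    ∀ l : ℕ,
      (1 / (Nb : ℝ) ^ l) * ∑ seq : Fin l → Fin Nb,
          pdist ((List.ofFn seq).foldl step x0) xhat ^ 2 ≤
        (1 - σ ^ 2 / (β * (Nb : ℝ))) ^ l * pdist x0 xhat ^ 2 +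
          (4 * β / (α * σ ^ 2)) * ∑ r, y r := by
  have hy0 : ∀ r, 0 ≤ y r := fun r => by rw [hy r]; positivity
  have hσ2 : (0:ℝ) < σ ^ 2 := by positivity
  have hβ : (0:ℝ) < β := lt_of_lt_of_le hα hαβ
  have hsumy : (0:ℝ) ≤ ∑ r, y r := Finset.sum_nonneg fun r _ => hy0 r
  have hconst : (0:ℝ) ≤ 4 * β / (α * σ ^ 2) := by positivity
  intro l
  rcases Nat.eq_zero_or_pos n with hn | hn
  · -- degenerate case n = 0 : all distances vanish
    subst hn
    haveI : Nonempty {ω : ℂ // ‖ω‖ = 1} := ⟨⟨1, by simp⟩⟩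
    have hpz : ∀ x xh : Fin 0 → ℂ, pdist x xh = 0 := by
      intro x xh
      have hz : (fun ω : {ω : ℂ // ‖ω‖ = 1} => evnorm (x - (ω : ℂ) • xh))
          = fun _ => (0:ℝ) := by
        funext ω; unfold evnorm; simp
      unfold pdist
      rw [hz]
      exact ciInf_const
    have h1 : (1 / (Nb:ℝ) ^ l) * ∑ seq : Fin l → Fin Nb,
        pdist ((List.ofFn seq).foldl step x0) xhat ^ 2 = 0 := by
      rw [Finset.sum_eq_zero fun seq _ => by rw [hpz]; norm_num, mul_zero]
    rw [h1, hpz]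
    simpa using mul_nonneg hconst hsumy
  -- main case
  have hMA : ∀ r (x : Fin n → ℂ) (i : (Γ r)), (M r).mulVec x i = A.mulVec x i.1 := by
    intro r x i
    simp only [Matrix.mulVec, dotProduct]
    exact Finset.sum_congr rfl fun j _ => by rw [hM r i j]
  have hblock : ∀ r (x : Fin n → ℂ), evnorm ((M r).mulVec x) ^ 2
      = ∑ i ∈ Γ r, ‖A.mulVec x i‖ ^ 2 := by
    intro r x
    rw [evnorm_sq, ← Finset.sum_coe_sort (Γ r) (fun i => ‖A.mulVec x i‖ ^ 2)]
    exact Finset.sum_congr rfl fun i _ => by rw [hMA r x i]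
  have hpart : ∀ f : Fin m → ℝ, ∑ r, ∑ i ∈ Γ r, f i = ∑ i, f i := by
    intro f
    rw [← Finset.sum_biUnion (fun i _ j _ hij => hdisj i j hij)]
    congr 1
    ext k
    simp only [Finset.mem_biUnion, Finset.mem_univ, true_and, iff_true]
    exact hcover k
  have hmagr : ∀ r (i : (Γ r)), ‖(M r).mulVec xhat i‖ = Real.sqrt (y i.1) := by
    intro r i
    rw [hMA r xhat i, hy i.1, Real.sqrt_sq (norm_nonneg _)]
  -- σ² ≤ β·Nb and Nb > 0
  have hv1 : evnorm (fun _ : Fin n => (1:ℂ)) ^ 2 = n := by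
    rw [evnorm_sq]; simp
  have hnpos : (0:ℝ) < (n:ℝ) := by exact_mod_cast hn
  have hkey : σ ^ 2 * n ≤ β * Nb * n := by
    have h := hsing (fun _ => 1)
    have h2 : σ ^ 2 * evnorm (fun _ : Fin n => (1:ℂ)) ^ 2
        ≤ evnorm (A.mulVec (fun _ => 1)) ^ 2 := by
      have h2' := mul_self_le_mul_self
        (mul_nonneg hσ.le (evnorm_nonneg (fun _ : Fin n => (1:ℂ)))) h
      nlinarith [h2']
    have h3 : evnorm (A.mulVec (fun _ => 1)) ^ 2
        = ∑ r : Fin Nb, ∑ i ∈ Γ r, ‖A.mulVec (fun _ => 1) i‖ ^ 2 := by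
      rw [evnorm_sq, ← hpart]
    have h4 : ∀ r : Fin Nb, ∑ i ∈ Γ r, ‖A.mulVec (fun _ => 1) i‖ ^ 2
        ≤ β * n := by
      intro r
      rw [← hblock]
      calc evnorm ((M r).mulVec (fun _ => 1)) ^ 2
          ≤ β * evnorm (fun _ : Fin n => (1:ℂ)) ^ 2 :=
            mulVec_norm_sq_le (M r) β hβ (hpave_hi r) _
        _ = β * n := by rw [hv1]
    calc σ ^ 2 * (n:ℝ) = σ ^ 2 * evnorm (fun _ : Fin n => (1:ℂ)) ^ 2 := by rw [hv1]
      _ ≤ evnorm (A.mulVec (fun _ => 1)) ^ 2 := h2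
      _ = ∑ r : Fin Nb, ∑ i ∈ Γ r, ‖A.mulVec (fun _ => 1) i‖ ^ 2 := h3
      _ ≤ ∑ _r : Fin Nb, β * (n:ℝ) := Finset.sum_le_sum fun r _ => h4 r
      _ = Nb * (β * n) := by rw [Finset.sum_const, Finset.card_univ, Fintype.card_fin,
            nsmul_eq_mul]
      _ = β * Nb * n := by ring
  have hσβ : σ ^ 2 ≤ β * Nb := by nlinarith
  have hNbpos : (0:ℝ) < (Nb:ℝ) := by nlinarith
  have hq0 : (0:ℝ) ≤ 1 - σ ^ 2 / (β * Nb) := by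
    rw [sub_nonneg, div_le_one (by positivity)]
    exact hσβ
  -- per-step averaged contraction
  have hper : ∀ x : Fin n → ℂ,
      (Nb:ℝ)⁻¹ * ∑ r, pdist (step x r) xhat ^ 2 ≤
        (1 - σ ^ 2 / (β * Nb)) * pdist x xhat ^ 2 + (4 / (α * Nb)) * ∑ i, y i := by
    intro x
    obtain ⟨ω, hω, hωe⟩ := pdist_exists x xhat
    have hr : ∀ r, pdist (step x r) xhat ^ 2 ≤
        pdist x xhat ^ 2
          - (1/β) * (∑ i ∈ Γ r, ‖A.mulVec (x - ω • xhat) i‖ ^ 2)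
          + (4/α) * ∑ i ∈ Γ r, y i := by
      intro r
      have hbb := block_bound (M r) (hfull r) α β hα hβ (hpave_lo r) (hpave_hi r)
        x xhat (fun i => y i.1) (fun i => hy0 i.1) (hmagr r) ω hω
      rw [hblock r (x - ω • xhat)] at hbb
      rw [Finset.sum_coe_sort (Γ r) y] at hbb
      have h1 : pdist (step x r) xhat ≤ evnorm (step x r - ω • xhat) :=
        pdist_le _ _ ω hω
      have h2 : pdist (step x r) xhat ^ 2 ≤ evnorm (step x r - ω • xhat) ^ 2 :=
        pow_le_pow_left₀ (pdist_nonneg _ _) h1 2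
      rw [← hstep x r] at hbb
      rw [hωe]
      exact h2.trans hbb
    have hsum := Finset.sum_le_sum (fun r (_ : r ∈ Finset.univ) => hr r)
    have hS : ∑ r : Fin Nb, (pdist x xhat ^ 2
          - (1/β) * (∑ i ∈ Γ r, ‖A.mulVec (x - ω • xhat) i‖ ^ 2)
          + (4/α) * ∑ i ∈ Γ r, y i)
        = Nb * pdist x xhat ^ 2
          - (1/β) * evnorm (A.mulVec (x - ω • xhat)) ^ 2
          + (4/α) * ∑ i, y i := by
      rw [Finset.sum_add_distrib, Finset.sum_sub_distrib, Finset.sum_const,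
        Finset.card_univ, Fintype.card_fin, nsmul_eq_mul,
        ← Finset.mul_sum, ← Finset.mul_sum, hpart, hpart, ← evnorm_sq]
    have hAe : σ ^ 2 * pdist x xhat ^ 2 ≤ evnorm (A.mulVec (x - ω • xhat)) ^ 2 := by
      have h := hsing (x - ω • xhat)
      rw [← hωe] at h
      have h2' := mul_self_le_mul_self
        (mul_nonneg hσ.le (pdist_nonneg x xhat)) h
      nlinarith [h2']
    calc (Nb:ℝ)⁻¹ * ∑ r, pdist (step x r) xhat ^ 2
        ≤ (Nb:ℝ)⁻¹ * (Nb * pdist x xhat ^ 2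
            - (1/β) * evnorm (A.mulVec (x - ω • xhat)) ^ 2 + (4/α) * ∑ i, y i) := by
          apply mul_le_mul_of_nonneg_left _ (inv_nonneg.mpr hNbpos.le)
          rw [← hS]; exact hsum
      _ ≤ (Nb:ℝ)⁻¹ * (Nb * pdist x xhat ^ 2
            - (1/β) * (σ ^ 2 * pdist x xhat ^ 2) + (4/α) * ∑ i, y i) := by
          apply mul_le_mul_of_nonneg_left _ (inv_nonneg.mpr hNbpos.le)
          have := mul_le_mul_of_nonneg_left hAe (by positivity : (0:ℝ) ≤ 1/β)
          linarith
      _ = (1 - σ ^ 2 / (β * Nb)) * pdist x xhat ^ 2 + (4 / (α * Nb)) * ∑ i, y i := by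
          field_simp
  -- main induction
  have key : ∀ (L : ℕ) (x : Fin n → ℂ),
      (1 / (Nb:ℝ) ^ L) * ∑ seq : Fin L → Fin Nb,
          pdist ((List.ofFn seq).foldl step x) xhat ^ 2 ≤
        (1 - σ ^ 2 / (β * Nb)) ^ L * pdist x xhat ^ 2 +
          ((4 / (α * Nb)) * ∑ i, y i) *
            ∑ i ∈ Finset.range L, (1 - σ ^ 2 / (β * Nb)) ^ i := by
    intro L
    induction L with
    | zero =>
        intro x
        have hcard : (Finset.univ : Finset (Fin 0 → Fin Nb)).card = 1 := by
          simp [Finset.card_univ]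
        simp only [pow_zero, Finset.range_zero, Finset.sum_empty, mul_zero, add_zero,
          one_div_one, one_mul, List.ofFn_zero, List.foldl_nil]
        rw [Finset.sum_const, hcard, one_smul]
    | succ L ih =>
        intro x
        have hofn : ∀ (r : Fin Nb) (s : Fin L → Fin Nb),
            List.ofFn (Fin.cons r s : Fin (L+1) → Fin Nb) = r :: List.ofFn s := by
          intro r s
          rw [List.ofFn_succ]
          simp
        have hre : (∑ seq : Fin (L+1) → Fin Nb,
              pdist ((List.ofFn seq).foldl step x) xhat ^ 2)
            = ∑ r : Fin Nb, ∑ seq : Fin L → Fin Nb,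
              pdist ((List.ofFn seq).foldl step (step x r)) xhat ^ 2 := by
          rw [← Fintype.sum_equiv (Fin.consEquiv (fun _ : Fin (L+1) => Fin Nb))
            (fun p : Fin Nb × (Fin L → Fin Nb) =>
              pdist ((List.ofFn p.2).foldl step (step x p.1)) xhat ^ 2)
            (fun seq => pdist ((List.ofFn seq).foldl step x) xhat ^ 2)
            (fun p => by rw [Fin.consEquiv]; simp only [Equiv.coe_fn_mk]; rw [hofn p.1 p.2]; rfl)]
          rw [Fintype.sum_prod_type]
        rw [hre]
        have hfact : (1 / (Nb:ℝ) ^ (L+1)) = (Nb:ℝ)⁻¹ * (1 / (Nb:ℝ) ^ L) := by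
          rw [pow_succ]; field_simp
        rw [hfact, mul_assoc, Finset.mul_sum]
        have hub1 : ∑ r : Fin Nb, ((1 / (Nb:ℝ) ^ L) * ∑ seq : Fin L → Fin Nb,
              pdist ((List.ofFn seq).foldl step (step x r)) xhat ^ 2)
            ≤ ∑ r : Fin Nb, ((1 - σ ^ 2 / (β * Nb)) ^ L * pdist (step x r) xhat ^ 2 +
              ((4 / (α * Nb)) * ∑ i, y i) *
                ∑ i ∈ Finset.range L, (1 - σ ^ 2 / (β * Nb)) ^ i) :=
          Finset.sum_le_sum fun r _ => ih (step x r)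
        have hub2 : ∑ r : Fin Nb, ((1 - σ ^ 2 / (β * Nb)) ^ L * pdist (step x r) xhat ^ 2 +
              ((4 / (α * Nb)) * ∑ i, y i) *
                ∑ i ∈ Finset.range L, (1 - σ ^ 2 / (β * Nb)) ^ i)
            = (1 - σ ^ 2 / (β * Nb)) ^ L * ∑ r, pdist (step x r) xhat ^ 2 +
              Nb * (((4 / (α * Nb)) * ∑ i, y i) *
                ∑ i ∈ Finset.range L, (1 - σ ^ 2 / (β * Nb)) ^ i) := by
          rw [Finset.sum_add_distrib, Finset.sum_const, Finset.card_univ,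
            Fintype.card_fin, nsmul_eq_mul, ← Finset.mul_sum]
        have hmono : (Nb:ℝ)⁻¹ * ∑ r : Fin Nb, ((1 / (Nb:ℝ) ^ L) * ∑ seq : Fin L → Fin Nb,
              pdist ((List.ofFn seq).foldl step (step x r)) xhat ^ 2)
            ≤ (Nb:ℝ)⁻¹ * ((1 - σ ^ 2 / (β * Nb)) ^ L * ∑ r, pdist (step x r) xhat ^ 2 +
              Nb * (((4 / (α * Nb)) * ∑ i, y i) *
                ∑ i ∈ Finset.range L, (1 - σ ^ 2 / (β * Nb)) ^ i)) := by
          apply mul_le_mul_of_nonneg_left _ (inv_nonneg.mpr hNbpos.le)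
          rw [← hub2]; exact hub1
        have hub3 : (Nb:ℝ)⁻¹ * ((1 - σ ^ 2 / (β * Nb)) ^ L * ∑ r, pdist (step x r) xhat ^ 2 +
              Nb * (((4 / (α * Nb)) * ∑ i, y i) *
                ∑ i ∈ Finset.range L, (1 - σ ^ 2 / (β * Nb)) ^ i))
            = (1 - σ ^ 2 / (β * Nb)) ^ L * ((Nb:ℝ)⁻¹ * ∑ r, pdist (step x r) xhat ^ 2) +
              ((4 / (α * Nb)) * ∑ i, y i) *
                ∑ i ∈ Finset.range L, (1 - σ ^ 2 / (β * Nb)) ^ i := by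
          rw [mul_add, ← mul_assoc ((Nb:ℝ)⁻¹) ((Nb:ℝ)) _,
            inv_mul_cancel₀ (ne_of_gt hNbpos), one_mul]
          ring
        have hub4 : (1 - σ ^ 2 / (β * Nb)) ^ L *
              ((Nb:ℝ)⁻¹ * ∑ r, pdist (step x r) xhat ^ 2)
            ≤ (1 - σ ^ 2 / (β * Nb)) ^ L *
              ((1 - σ ^ 2 / (β * Nb)) * pdist x xhat ^ 2 + (4 / (α * Nb)) * ∑ i, y i) :=
          mul_le_mul_of_nonneg_left (hper x) (pow_nonneg hq0 L)
        have hfin : (1 - σ ^ 2 / (β * Nb)) ^ L *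
              ((1 - σ ^ 2 / (β * Nb)) * pdist x xhat ^ 2 + (4 / (α * Nb)) * ∑ i, y i) +
              ((4 / (α * Nb)) * ∑ i, y i) *
                ∑ i ∈ Finset.range L, (1 - σ ^ 2 / (β * Nb)) ^ i
            = (1 - σ ^ 2 / (β * Nb)) ^ (L+1) * pdist x xhat ^ 2 +
              ((4 / (α * Nb)) * ∑ i, y i) *
                ∑ i ∈ Finset.range (L+1), (1 - σ ^ 2 / (β * Nb)) ^ i := by
          rw [Finset.sum_range_succ, pow_succ]
          ring
        calc (Nb:ℝ)⁻¹ * ∑ r : Fin Nb, ((1 / (Nb:ℝ) ^ L) * ∑ seq : Fin L → Fin Nb,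
              pdist ((List.ofFn seq).foldl step (step x r)) xhat ^ 2)
            ≤ (1 - σ ^ 2 / (β * Nb)) ^ L * ((Nb:ℝ)⁻¹ * ∑ r, pdist (step x r) xhat ^ 2) +
              ((4 / (α * Nb)) * ∑ i, y i) *
                ∑ i ∈ Finset.range L, (1 - σ ^ 2 / (β * Nb)) ^ i := by
              rw [← hub3]; exact hmono
          _ ≤ (1 - σ ^ 2 / (β * Nb)) ^ (L+1) * pdist x xhat ^ 2 +
              ((4 / (α * Nb)) * ∑ i, y i) *
                ∑ i ∈ Finset.range (L+1), (1 - σ ^ 2 / (β * Nb)) ^ i := by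
              rw [← hfin]; exact add_le_add_left hub4 _
  -- sum the geometric series
  have hgeom : (σ ^ 2 / (β * Nb)) *
      ∑ i ∈ Finset.range l, (1 - σ ^ 2 / (β * Nb)) ^ i ≤ 1 := by
    have h1 := geom_sum_mul (1 - σ ^ 2 / (β * Nb)) l
    have h2 : (0:ℝ) ≤ (1 - σ ^ 2 / (β * Nb)) ^ l := pow_nonneg hq0 l
    nlinarith [h1, h2]
  have hK : (0:ℝ) ≤ β * Nb / σ ^ 2 := by positivity
  have hid : (β * Nb / σ ^ 2) * (σ ^ 2 / (β * Nb)) = 1 := by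
    field_simp
  have hS' : ∑ i ∈ Finset.range l, (1 - σ ^ 2 / (β * Nb)) ^ i ≤ β * Nb / σ ^ 2 := by
    nlinarith [hgeom, hid, hK]
  have hc : (0:ℝ) ≤ (4 / (α * Nb)) * ∑ i, y i :=
    mul_nonneg (by positivity) hsumy
  have hlast := mul_le_mul_of_nonneg_left hS' hc
  have heq : ((4 / (α * Nb)) * ∑ i, y i) * (β * Nb / σ ^ 2)
      = 4 * β / (α * σ ^ 2) * ∑ i, y i := by
    field_simp
  calc (1 / (Nb:ℝ) ^ l) * ∑ seq : Fin l → Fin Nb,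
        pdist ((List.ofFn seq).foldl step x0) xhat ^ 2
      ≤ (1 - σ ^ 2 / (β * Nb)) ^ l * pdist x0 xhat ^ 2 +
          ((4 / (α * Nb)) * ∑ i, y i) *
            ∑ i ∈ Finset.range l, (1 - σ ^ 2 / (β * Nb)) ^ i := key l x0
    _ ≤ (1 - σ ^ 2 / (β * Nb)) ^ l * pdist x0 xhat ^ 2 +
          4 * β / (α * σ ^ 2) * ∑ i, y i := by
        rw [← heq]; exact add_le_add_right hlast _
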